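/- Let H be a real Hilbert space, u : [0,∞) → H continuously differentiable with derivative u', E : H → ℝ, e₀ ∈ ℝ, K > 0, θ ∈ (0, 1/2], and t₀ ≥ 0. Suppose that for every t ≥ 0 the function s ↦ E(u(s)) is differentiable at t with derivative −‖u'(t)‖², and that for all t ≥ t₀ one has E(u(t)) ≥ e₀ and ‖u'(t)‖ ≥ K·(E(u(t)) − e₀)^{1−θ}. Then there exists u^∞ ∈ H such that u(t) → u^∞ in the norm of H as t → ∞. -/

import Mathlib

open Filter

/-- Convergence to equilibrium of a gradient-flow trajectory satisfying the
energy identity and the Łojasiewicz–Simon inequality on `[t₀, ∞)`. -/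
theorem trajectory_converges
    {H : Type*} [NormedAddCommGroup H] [InnerProductSpace ℝ H] [CompleteSpace H]
    (u u' : ℝ → H) (E : H → ℝ) (e₀ K θ t₀ : ℝ)
    (hu : ∀ s ≥ (0 : ℝ), HasDerivAt u (u' s) s) (hu' : ContinuousOn u' (Set.Ici 0))
    (hK : 0 < K) (hθ : θ ∈ Set.Ioc (0 : ℝ) (1 / 2)) (ht₀ : 0 ≤ t₀)
    (hderiv : ∀ t ≥ (0 : ℝ), HasDerivAt (fun s => E (u s)) (-‖u' t‖ ^ 2) t)
    (hE : ∀ t ≥ t₀, E (u t) ≥ e₀)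
    (hLS : ∀ t ≥ t₀, ‖u' t‖ ≥ K * (E (u t) - e₀) ^ (1 - θ)) :
    ∃ uinf : H, Tendsto u atTop (nhds uinf) := by
  obtain ⟨hθ0, hθ2⟩ := hθ
  have hθ1 : θ < 1 := lt_of_le_of_lt hθ2 (by norm_num)
  set F : ℝ → ℝ := fun s => E (u s) with hF
  have hθK : 0 < θ * K := mul_pos hθ0 hK
  by_cases hpos : ∀ t ≥ t₀, (0:ℝ) < F t - e₀
  · -- Case A : the energy stays strictly above `e₀`.
    -- derivative of φ = (F - e₀) ^ θ
    have hφ : ∀ t ≥ t₀, HasDerivAt (fun s => (F s - e₀) ^ θ)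
        (-‖u' t‖ ^ 2 * θ * (F t - e₀) ^ (θ - 1)) t := by
      intro t ht
      have h1 : HasDerivAt (fun s => F s - e₀) (-‖u' t‖ ^ 2) t :=
        (hderiv t (le_trans ht₀ ht)).sub_const e₀
      exact h1.rpow_const (Or.inl (ne_of_gt (hpos t ht)))
    have hFcont : ContinuousOn F (Set.Ici t₀) := fun t ht =>
      ((hderiv t (le_trans ht₀ ht)).continuousAt).continuousWithinAt
    have hu'cont : ContinuousOn u' (Set.Ici t₀) :=
      hu'.mono (Set.Ici_subset_Ici.2 ht₀)
    -- key integral bound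
    have key : ∀ T ≥ t₀, θ * K * ∫ s in t₀..T, ‖u' s‖ ≤ (F t₀ - e₀) ^ θ := by
      intro T hT
      have hIcc : Set.uIcc t₀ T = Set.Icc t₀ T := Set.uIcc_of_le hT
      have hsub : Set.Icc t₀ T ⊆ Set.Ici t₀ := Set.Icc_subset_Ici_self
      -- continuity of the derivative of φ on `[t₀, T]`
      have hDcont : ContinuousOn
          (fun s => -‖u' s‖ ^ 2 * θ * (F s - e₀) ^ (θ - 1)) (Set.Icc t₀ T) := by
        have h1 : ContinuousOn (fun s => -‖u' s‖ ^ 2 * θ) (Set.Icc t₀ T) :=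
          ((((hu'cont.mono hsub).norm).pow 2).neg).mul continuousOn_const
        have h2 : ContinuousOn (fun s => (F s - e₀) ^ (θ - 1)) (Set.Icc t₀ T) := by
          apply ContinuousOn.rpow_const ((hFcont.mono hsub).sub continuousOn_const)
          intro s hs
          exact Or.inl (ne_of_gt (hpos s hs.1))
        exact h1.mul h2
      have hftc : (∫ s in t₀..T, -‖u' s‖ ^ 2 * θ * (F s - e₀) ^ (θ - 1))
          = (F T - e₀) ^ θ - (F t₀ - e₀) ^ θ := by
        apply intervalIntegral.integral_eq_sub_of_hasDerivAt
        · intro s hs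
          rw [hIcc] at hs
          exact hφ s hs.1
        · rw [intervalIntegrable_iff_integrableOn_Icc_of_le hT]
          exact hDcont.integrableOn_compact isCompact_Icc
      -- pointwise comparison
      have hpt : ∀ s ∈ Set.Icc t₀ T,
          -‖u' s‖ ^ 2 * θ * (F s - e₀) ^ (θ - 1) ≤ -(θ * K * ‖u' s‖) := by
        intro s hs
        have hg : (0:ℝ) < F s - e₀ := hpos s hs.1
        have hls := hLS s hs.1
        have hnorm : (0:ℝ) ≤ ‖u' s‖ := norm_nonneg _
        have h1 : K * (F s - e₀) ^ (1 - θ) * ‖u' s‖ ≤ ‖u' s‖ ^ 2 := by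
          rw [sq]
          exact mul_le_mul_of_nonneg_right hls hnorm
        have hgp : (0:ℝ) < (F s - e₀) ^ (θ - 1) := Real.rpow_pos_of_pos hg _
        have h2 : K * (F s - e₀) ^ (1 - θ) * ‖u' s‖ * (θ * (F s - e₀) ^ (θ - 1))
            ≤ ‖u' s‖ ^ 2 * (θ * (F s - e₀) ^ (θ - 1)) :=
          mul_le_mul_of_nonneg_right h1 (le_of_lt (mul_pos hθ0 hgp))
        have h3 : K * (F s - e₀) ^ (1 - θ) * ‖u' s‖ * (θ * (F s - e₀) ^ (θ - 1))
            = θ * K * ‖u' s‖ := by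
          have hone : (F s - e₀) ^ (1 - θ) * (F s - e₀) ^ (θ - 1) = 1 := by
            rw [← Real.rpow_add hg, show (1 - θ) + (θ - 1) = 0 by ring, Real.rpow_zero]
          calc K * (F s - e₀) ^ (1 - θ) * ‖u' s‖ * (θ * (F s - e₀) ^ (θ - 1))
              = θ * K * ‖u' s‖ * ((F s - e₀) ^ (1 - θ) * (F s - e₀) ^ (θ - 1)) := by ring
            _ = θ * K * ‖u' s‖ := by rw [hone, mul_one]
        rw [h3] at h2
        nlinarith [h2]
      have hmono : ∫ s in t₀..T, -‖u' s‖ ^ 2 * θ * (F s - e₀) ^ (θ - 1)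
          ≤ ∫ s in t₀..T, -(θ * K * ‖u' s‖) := by
        apply intervalIntegral.integral_mono_on hT
        · rw [intervalIntegrable_iff_integrableOn_Icc_of_le hT]
          exact hDcont.integrableOn_compact isCompact_Icc
        · rw [intervalIntegrable_iff_integrableOn_Icc_of_le hT]
          exact ((( (hu'cont.mono hsub).norm).const_smul (θ * K)).neg).integrableOn_compact
            isCompact_Icc
        · exact hpt
      have hintconst : ∫ s in t₀..T, -(θ * K * ‖u' s‖)
          = -(θ * K * ∫ s in t₀..T, ‖u' s‖) := by
        rw [intervalIntegral.integral_neg, intervalIntegral.integral_const_mul]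
      have hφTnonneg : (0:ℝ) ≤ (F T - e₀) ^ θ :=
        Real.rpow_nonneg (le_of_lt (hpos T hT)) _
      rw [hintconst, hftc] at hmono
      linarith
    -- integrability of `u'` on `(t₀, ∞)`
    have hIntOn : ∀ T : ℝ, MeasureTheory.IntegrableOn u' (Set.Ioc t₀ (max t₀ T)) := by
      intro T
      have : ContinuousOn u' (Set.Icc t₀ (max t₀ T)) := hu'cont.mono Set.Icc_subset_Ici_self
      exact (this.integrableOn_compact isCompact_Icc).mono_set Set.Ioc_subset_Icc_self
    have hInt : MeasureTheory.IntegrableOn u' (Set.Ioi t₀) := by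
      apply MeasureTheory.integrableOn_Ioi_of_intervalIntegral_norm_bounded
        ((F t₀ - e₀) ^ θ / (θ * K)) t₀ hIntOn
        (tendsto_atTop_mono (fun T => le_max_right t₀ T) tendsto_id)
      filter_upwards with T
      have hb := key (max t₀ T) (le_max_left _ _)
      rw [le_div_iff₀ hθK, mul_comm]
      exact hb
    -- FTC for `u`
    have hFTCu : ∀ T ≥ t₀, u T = u t₀ + ∫ s in t₀..T, u' s := by
      intro T hT
      have : ∫ s in t₀..T, u' s = u T - u t₀ := by
        apply intervalIntegral.integral_eq_sub_of_hasDerivAt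
        · intro s hs
          rw [Set.uIcc_of_le hT] at hs
          exact hu s (le_trans ht₀ hs.1)
        · rw [intervalIntegrable_iff_integrableOn_Icc_of_le hT]
          exact (hu'cont.mono Set.Icc_subset_Ici_self).integrableOn_compact isCompact_Icc
      rw [this]; abel
    refine ⟨u t₀ + ∫ s in Set.Ioi t₀, u' s, ?_⟩
    have h1 := MeasureTheory.intervalIntegral_tendsto_integral_Ioi t₀ hInt
      (tendsto_id (α := ℝ))
    have h2 : Tendsto (fun T => u t₀ + ∫ s in t₀..T, u' s) atTop
        (nhds (u t₀ + ∫ s in Set.Ioi t₀, u' s)) := tendsto_const_nhds.add h1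
    apply h2.congr'
    filter_upwards [eventually_ge_atTop t₀] with T hT
    exact (hFTCu T hT).symm
  · -- Case B : the energy reaches `e₀`; trajectory becomes stationary.
    push_neg at hpos
    obtain ⟨t₁, ht₁, hFt₁⟩ := hpos
    have hFt₁' : F t₁ = e₀ := le_antisymm (by linarith) (hE t₁ ht₁)
    -- F is antitone on [0, ∞)
    have hFcont : ContinuousOn F (Set.Ici 0) := fun t ht =>
      ((hderiv t ht).continuousAt).continuousWithinAt
    have hanti : AntitoneOn F (Set.Ici (0:ℝ)) := by
      apply antitoneOn_of_deriv_nonpos (convex_Ici 0) hFcont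
      · intro t ht
        rw [interior_Ici] at ht
        exact ((hderiv t (le_of_lt ht)).differentiableAt).differentiableWithinAt
      · intro t ht
        rw [interior_Ici] at ht
        rw [(hderiv t (le_of_lt ht)).deriv]
        simp [sq_nonneg]
    -- F ≡ e₀ on [t₁, ∞)
    have hFconst : ∀ t ≥ t₁, F t = e₀ := by
      intro t ht
      have h1 : F t ≤ F t₁ := hanti (Set.mem_Ici.2 (le_trans ht₀ ht₁))
        (Set.mem_Ici.2 (le_trans (le_trans ht₀ ht₁) ht)) ht
      have h2 : e₀ ≤ F t := hE t (le_trans ht₁ ht)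
      linarith [hFt₁' ▸ h1]
    -- hence u' = 0 on (t₁, ∞)
    have hu'0 : ∀ t > t₁, u' t = 0 := by
      intro t ht
      have hmem : Set.Ioi t₁ ∈ nhds t := Ioi_mem_nhds ht
      have heq : F =ᶠ[nhds t] fun _ => e₀ := by
        filter_upwards [hmem] with s hs
        exact hFconst s (le_of_lt hs)
      have hd0 : HasDerivAt F 0 t :=
        (hasDerivAt_const t e₀).congr_of_eventuallyEq heq
      have := (hderiv t (le_trans (le_trans ht₀ ht₁) (le_of_lt ht))).unique hd0
      have hn : ‖u' t‖ = 0 := by nlinarith [norm_nonneg (u' t), this]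
      exact norm_eq_zero.1 hn
    -- u is eventually constant
    refine ⟨u (t₁ + 1), ?_⟩
    have hconst : ∀ T ≥ t₁ + 1, u T = u (t₁ + 1) := by
      intro T hT
      have h0 : ∫ s in (t₁+1)..T, u' s = u T - u (t₁ + 1) := by
        apply intervalIntegral.integral_eq_sub_of_hasDerivAt
        · intro s hs
          rw [Set.uIcc_of_le hT] at hs
          exact hu s (by linarith [hs.1, ht₀, ht₁])
        · rw [intervalIntegrable_iff_integrableOn_Icc_of_le hT]
          apply MeasureTheory.IntegrableOn.congr_fun
            (MeasureTheory.integrableOn_zero (ε' := H))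
          · intro s hs
            exact (hu'0 s (by linarith [hs.1])).symm
          · exact measurableSet_Icc
      have h1 : ∫ s in (t₁+1)..T, u' s = 0 := by
        rw [intervalIntegral.integral_congr (g := fun _ => (0:H))]
        · simp
        · intro s hs
          rw [Set.uIcc_of_le hT] at hs
          exact hu'0 s (by linarith [hs.1])
      rw [h1] at h0
      have h2 := h0.symm
      rw [sub_eq_zero] at h2
      exact h2
    apply Tendsto.congr' _ (tendsto_const_nhds (x := u (t₁ + 1)))
    filter_upwards [eventually_ge_atTop (t₁ + 1)] with T hT
    exact (hconst T hT).symm
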